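/- Let λ > 0 be a real number and let H = x·A + y·B + z·C with x² + y² − z² = −λ² and z < 0. Then there exists M ∈ SL(2,ℝ) with M(−λC)M⁻¹ = H. (The lower sheet of the two-sheeted hyperboloid x² + y² − z² = −λ² is the adjoint orbit of −λC.) -/

import Mathlib

noncomputable def A : Matrix (Fin 2) (Fin 2) ℝ := !![0, 1; 1, 0]
noncomputable def B : Matrix (Fin 2) (Fin 2) ℝ := !![1, 0; 0, -1]
noncomputable def C : Matrix (Fin 2) (Fin 2) ℝ := !![0, 1; -1, 0]

/-- For `λ > 0`, every point `H = xA + yB + zC` of the lower sheet of the two-sheeted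
hyperboloid `x² + y² − z² = −λ²` (i.e. with `z < 0`) lies in the adjoint orbit of `−λC`. -/
theorem lower_sheet_subset_adjoint_orbit_neg_lamC (lam x y z : ℝ) (hlam : 0 < lam)
    (hH : x ^ 2 + y ^ 2 - z ^ 2 = -lam ^ 2) (hz : z < 0) :
    ∃ M : Matrix (Fin 2) (Fin 2) ℝ, M.det = 1 ∧
      M * ((-lam) • C) * M⁻¹ = x • A + y • B + z • C := by
  have hxz : x + z < 0 := by nlinarith [sq_nonneg (x + z), sq_nonneg y]
  set a : ℝ := Real.sqrt (-(x + z) / lam) with ha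
  have hapos : 0 < a := Real.sqrt_pos.mpr (div_pos (by linarith) hlam)
  have ha2 : a ^ 2 = -(x + z) / lam := Real.sq_sqrt (le_of_lt (div_pos (by linarith) hlam))
  have hla2 : lam * a ^ 2 = -(x + z) := by
    rw [ha2]; field_simp
  have hane : a ≠ 0 := ne_of_gt hapos
  have hlne : lam ≠ 0 := ne_of_gt hlam
  refine ⟨!![a, 0; y / (lam * a), a⁻¹], ?_, ?_⟩
  · simp [Matrix.det_fin_two_of]
    field_simp
  · have hdet : (!![a, 0; y / (lam * a), a⁻¹] : Matrix (Fin 2) (Fin 2) ℝ).det = 1 := by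
      simp [Matrix.det_fin_two_of]; field_simp
    have hinv : (!![a, 0; y / (lam * a), a⁻¹] : Matrix (Fin 2) (Fin 2) ℝ)⁻¹ =
        !![a⁻¹, 0; -(y / (lam * a)), a] := by
      rw [Matrix.inv_def, hdet, Matrix.adjugate_fin_two_of]
      simp
    have key : a ^ 4 * lam ^ 2 * x - a ^ 4 * lam ^ 2 * z =
        a ^ 2 * lam * y ^ 2 + a ^ 2 * lam ^ 3 := by
      linear_combination (-(y ^ 2 + lam ^ 2) + (x - z) * (lam * a ^ 2 - x - z)) * hla2 +
        (x + z) * hH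
    rw [hinv]
    ext i j
    fin_cases i <;> fin_cases j <;>
      simp [A, B, C, Matrix.mul_apply, Fin.sum_univ_two, Matrix.smul_apply] <;>
      (try field_simp) <;> linarith [key, hla2, (by rw [hla2] : lam * a ^ 2 * (x - z) = -(x + z) * (x - z))]
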